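/- (Compatibility theorem for finitely additive measures.) Let B be a Boolean algebra and for d ∈ {0,1} let B_d be a Boolean subalgebra of B equipped with a finite finitely additive measure Ξ_d : B_d → [0,∞). The following are equivalent: (a) there is a finitely additive measure Ξ on the subalgebra generated by B_0 ∪ B_1 extending both Ξ_0 and Ξ_1; (b) Ξ_0(1) = Ξ_1(1) and for all a ∈ B_0, a' ∈ B_1, if a ≤ a' then Ξ_0(a) ≤ Ξ_1(a'); (c) for all d, d' ∈ {0,1}, a ∈ B_d, a' ∈ B_{d'}, if a ≤ a' then Ξ_d(a) ≤ Ξ_{d'}(a'). -/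

import Mathlib

/-- `C` is a Boolean subalgebra of `B` (as a set closed under the operations). -/
def IsSubalg {B : Type*} [BooleanAlgebra B] (C : Set B) : Prop :=
  ⊥ ∈ C ∧ ⊤ ∈ C ∧ (∀ a ∈ C, ∀ b ∈ C, a ⊔ b ∈ C) ∧ (∀ a ∈ C, aᶜ ∈ C)

/-- `Ξ` is a (finite, real-valued) finitely additive measure on the subalgebra `C`. -/
def IsFAMOn {B : Type*} [BooleanAlgebra B] (Ξ : B → ℝ) (C : Set B) : Prop :=
  Ξ ⊥ = 0 ∧ (∀ a ∈ C, 0 ≤ Ξ a) ∧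
    ∀ a ∈ C, ∀ b ∈ C, a ⊓ b = ⊥ → Ξ (a ⊔ b) = Ξ a + Ξ b

/-- The Boolean subalgebra generated by `S`. -/
def subalgClosure {B : Type*} [BooleanAlgebra B] (S : Set B) : Set B :=
  ⋂₀ {C : Set B | IsSubalg C ∧ S ⊆ C}

section Aux
variable {B : Type*} [BooleanAlgebra B]

namespace FamExt

/-! ### Subalgebra basics -/

theorem inf_mem {C : Set B} (hC : IsSubalg C) {a b : B} (ha : a ∈ C) (hb : b ∈ C) :
    a ⊓ b ∈ C := by
  have := hC.2.2.2 _ (hC.2.2.1 _ (hC.2.2.2 _ ha) _ (hC.2.2.2 _ hb))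
  simpa using this

theorem finsetSup_mem {C : Set B} (hC : IsSubalg C) {ι : Type*} (s : Finset ι) (f : ι → B)
    (hf : ∀ i ∈ s, f i ∈ C) : s.sup f ∈ C := by
  induction s using Finset.cons_induction with
  | empty => simpa using hC.1
  | cons i s hi ih =>
      rw [Finset.sup_cons]
      exact hC.2.2.1 _ (hf i (Finset.mem_cons_self i s)) _
        (ih fun j hj => hf j (Finset.mem_cons_of_mem hj))

theorem finsetInf_mem {C : Set B} (hC : IsSubalg C) {ι : Type*} (s : Finset ι) (f : ι → B)
    (hf : ∀ i ∈ s, f i ∈ C) : s.inf f ∈ C := by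
  induction s using Finset.cons_induction with
  | empty => simpa using hC.2.1
  | cons i s hi ih =>
      rw [Finset.inf_cons]
      exact inf_mem hC (hf i (Finset.mem_cons_self i s))
        (ih fun j hj => hf j (Finset.mem_cons_of_mem hj))

theorem subalgClosure_isSubalg (S : Set B) : IsSubalg (subalgClosure S) := by
  refine ⟨?_, ?_, ?_, ?_⟩
  · exact fun C hC => hC.1.1
  · exact fun C hC => hC.1.2.1
  · exact fun a ha b hb C hC => hC.1.2.2.1 a (ha C hC) b (hb C hC)
  · exact fun a ha C hC => hC.1.2.2.2 a (ha C hC)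

theorem subset_subalgClosure (S : Set B) : S ⊆ subalgClosure S :=
  fun x hx _C hC => hC.2 hx

/-! ### fam basics -/

theorem fam_mono {C : Set B} {Ξ : B → ℝ} (hC : IsSubalg C) (hΞ : IsFAMOn Ξ C)
    {a b : B} (ha : a ∈ C) (hb : b ∈ C) (hab : a ≤ b) : Ξ a ≤ Ξ b := by
  have h1 : b ⊓ aᶜ ∈ C := inf_mem hC hb (hC.2.2.2 _ ha)
  have h2 : a ⊓ (b ⊓ aᶜ) = ⊥ := by
    rw [inf_comm, inf_assoc]
    simp
  have h3 : a ⊔ b ⊓ aᶜ = b := by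
    rw [sup_inf_left, sup_compl_eq_top, inf_top_eq, sup_eq_right.2 hab]
  have := hΞ.2.2 a ha _ h1 h2
  rw [h3] at this
  rw [this]
  have := hΞ.2.1 _ h1
  linarith

theorem fam_sum {C : Set B} {Ξ : B → ℝ} (hC : IsSubalg C) (hΞ : IsFAMOn Ξ C)
    {ι : Type*} (s : Finset ι) (f : ι → B) (hf : ∀ i ∈ s, f i ∈ C)
    (hd : ∀ i ∈ s, ∀ j ∈ s, i ≠ j → f i ⊓ f j = ⊥) :
    Ξ (s.sup f) = ∑ i ∈ s, Ξ (f i) := by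
  induction s using Finset.cons_induction with
  | empty => simpa using hΞ.1
  | cons i s hi ih =>
      rw [Finset.sup_cons, Finset.sum_cons]
      have hdisj : f i ⊓ s.sup f = ⊥ := by
        rw [Finset.sup_inf_distrib_left]
        refine le_antisymm (Finset.sup_le fun j hj => ?_) bot_le
        exact (hd i (Finset.mem_cons_self i s) j (Finset.mem_cons_of_mem hj)
          (fun h => hi (h ▸ hj))).le
      rw [hΞ.2.2 _ (hf i (Finset.mem_cons_self i s)) _
          (finsetSup_mem hC s f fun j hj => hf j (Finset.mem_cons_of_mem hj)) hdisj,
        ih (fun j hj => hf j (Finset.mem_cons_of_mem hj))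
          (fun a ha b hb hab => hd a (Finset.mem_cons_of_mem ha) b
            (Finset.mem_cons_of_mem hb) hab)]



/-- The "Stone space": prime ideals of `B`. -/
def StSp (B : Type*) [BooleanAlgebra B] : Type _ :=
  {J : Order.Ideal B // Order.Ideal.IsPrime J}

/-- Stone representation map. -/
def ePt (b : B) : Set (StSp B) := {x | b ∉ x.1}

theorem ePt_bot : ePt (⊥ : B) = ∅ := by
  ext x; simp [ePt, x.1.bot_mem]

theorem ePt_top : ePt (⊤ : B) = Set.univ := by
  ext x
  have : Order.Ideal.IsProper x.1 := x.2.toIsProper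
  simp [ePt, this.top_notMem]

theorem ePt_sup (a b : B) : ePt (a ⊔ b) = ePt a ∪ ePt b := by
  ext x
  simp only [ePt, Set.mem_setOf_eq, Set.mem_union]
  constructor
  · intro h
    by_contra hc
    push_neg at hc
    exact h (x.1.sup_mem hc.1 hc.2)
  · rintro (h | h) hs
    · exact h (x.1.lower le_sup_left hs)
    · exact h (x.1.lower le_sup_right hs)

theorem ePt_inf (a b : B) : ePt (a ⊓ b) = ePt a ∩ ePt b := by
  ext x
  simp only [ePt, Set.mem_setOf_eq, Set.mem_inter_iff]
  constructor
  · intro h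
    constructor
    · exact fun ha => h (x.1.lower inf_le_left ha)
    · exact fun hb => h (x.1.lower inf_le_right hb)
  · rintro ⟨ha, hb⟩ hab
    rcases x.2.mem_or_mem hab with h | h
    · exact ha h
    · exact hb h

theorem ePt_compl (a : B) : ePt (aᶜ) = (ePt a)ᶜ := by
  ext x
  simp only [ePt, Set.mem_setOf_eq, Set.mem_compl_iff, not_not]
  constructor
  · intro h
    rcases x.2.mem_or_compl_mem (x := a) with h' | h'
    · exact h'
    · exact absurd h' h
  · intro ha hc
    have : Order.Ideal.IsProper x.1 := x.2.toIsProper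
    exact this.top_notMem (by simpa using x.1.sup_mem ha hc)

theorem ePt_nonempty {a : B} (ha : a ≠ ⊥) : (ePt a).Nonempty := by
  have hdisj : Disjoint ((Order.PFilter.principal a : Order.PFilter B) : Set B)
      ((Order.Ideal.principal (⊥ : B) : Order.Ideal B) : Set B) := by
    rw [Set.disjoint_left]
    intro b hb hb'
    have h1 : a ≤ b := by simpa using hb
    have h2 : b ≤ ⊥ := Order.Ideal.mem_principal.1 hb'
    exact ha (le_bot_iff.1 (h1.trans h2))
  obtain ⟨J, hJ, _, hdis⟩ := DistribLattice.prime_ideal_of_disjoint_filter_ideal hdisj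
  refine ⟨⟨J, hJ⟩, ?_⟩
  simp only [ePt, Set.mem_setOf_eq]
  intro haJ
  exact Set.disjoint_left.1 hdis (Order.PFilter.mem_principal.2 le_rfl) haJ

theorem le_of_ePt_subset {a b : B} (h : ePt a ⊆ ePt b) : a ≤ b := by
  by_contra hab
  have hne : a ⊓ bᶜ ≠ ⊥ := by
    intro he
    apply hab
    have : a = a ⊓ b ⊔ a ⊓ bᶜ := by rw [← inf_sup_left, sup_compl_eq_top, inf_top_eq]
    rw [he, sup_bot_eq] at this
    rw [this]
    exact inf_le_right
  obtain ⟨x, hx⟩ := ePt_nonempty hne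
  rw [ePt_inf, ePt_compl] at hx
  exact hx.2 (h hx.1)

theorem ePt_inj {a b : B} (h : ePt a = ePt b) : a = b :=
  le_antisymm (le_of_ePt_subset h.le) (le_of_ePt_subset h.ge)

theorem mem_ePt_finsetSup {ι : Type*} (s : Finset ι) (f : ι → B) (x : StSp B) :
    x ∈ ePt (s.sup f) ↔ ∃ i ∈ s, x ∈ ePt (f i) := by
  induction s using Finset.cons_induction with
  | empty => simp [ePt_bot]
  | cons i s hi ih => simp [Finset.sup_cons, ePt_sup, ih, Set.mem_union]

theorem mem_ePt_finsetInf {ι : Type*} (s : Finset ι) (f : ι → B) (x : StSp B) :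
    x ∈ ePt (s.inf f) ↔ ∀ i ∈ s, x ∈ ePt (f i) := by
  induction s using Finset.cons_induction with
  | empty => simp [ePt_top]
  | cons i s hi ih => simp [Finset.inf_cons, ePt_inf, ih, Set.mem_inter_iff]

/-- Characteristic function on the Stone space. -/
noncomputable def chi (b : B) : StSp B → ℝ := fun x => (Set.indicator (ePt b) (fun _ => 1)) x

open Classical in
theorem chi_def (b : B) (x : StSp B) : chi b x = if x ∈ ePt b then 1 else 0 := by
  by_cases h : x ∈ ePt b <;> simp [chi, h]

theorem chi_of_mem {b : B} {x : StSp B} (h : x ∈ ePt b) : chi b x = 1 := by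
  simp [chi, h]

theorem chi_of_not_mem {b : B} {x : StSp B} (h : x ∉ ePt b) : chi b x = 0 := by
  simp [chi, h]

theorem chi_nonneg (b : B) (x : StSp B) : 0 ≤ chi b x := by
  by_cases h : x ∈ ePt b
  · rw [chi_of_mem h]; norm_num
  · rw [chi_of_not_mem h]

theorem chi_le_one (b : B) (x : StSp B) : chi b x ≤ 1 := by
  by_cases h : x ∈ ePt b
  · rw [chi_of_mem h]
  · rw [chi_of_not_mem h]; norm_num

theorem chi_top (x : StSp B) : chi (⊤ : B) x = 1 :=
  chi_of_mem (by rw [ePt_top]; trivial)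

theorem chi_bot : chi (⊥ : B) = 0 := by
  funext x
  exact chi_of_not_mem (by rw [ePt_bot]; exact id)





set_option maxHeartbeats 1000000 in
theorem atomize {C : Set B} {Ξ : B → ℝ} (hC : IsSubalg C) (hΞ : IsFAMOn Ξ C)
    {n : ℕ} (a : Fin n → B) (ha : ∀ i, a i ∈ C) (α : Fin n → ℝ) :
    ∃ (u : (Fin n → Bool) → B) (γ : (Fin n → Bool) → ℝ),
      (∀ ε, u ε ∈ C) ∧
      (∀ ε ε', ε ≠ ε' → u ε ⊓ u ε' = ⊥) ∧
      Finset.univ.sup u = ⊤ ∧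
      (∀ x, ∑ ε, γ ε * chi (u ε) x = ∑ i, α i * chi (a i) x) ∧
      ∑ ε, γ ε * Ξ (u ε) = ∑ i, α i * Ξ (a i) := by
  classical
  set u : (Fin n → Bool) → B :=
    (fun ε => Finset.univ.inf fun i => if ε i then a i else (a i)ᶜ) with hu
  set γ : (Fin n → Bool) → ℝ := (fun ε => ∑ i, if ε i then α i else 0) with hγ
  have hmem : ∀ (x : StSp B) (ε), x ∈ ePt (u ε) ↔ ∀ i, (ε i = true ↔ x ∈ ePt (a i)) := by
    intro x ε
    rw [hu, mem_ePt_finsetInf]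
    constructor
    · intro H i
      have := H i (Finset.mem_univ i)
      cases hi : ε i with
      | true => rw [hi] at this; rw [if_pos rfl] at this; simp [this]
      | false =>
          rw [hi] at this; rw [if_neg (by simp)] at this
          rw [ePt_compl] at this
          simp only [Set.mem_compl_iff] at this
          simp [this]
    · intro H i _
      cases hi : ε i with
      | true => rw [if_pos (by simp [hi])]; exact (H i).1 hi
      | false =>
          rw [if_neg (by simp [hi]), ePt_compl, Set.mem_compl_iff]
          intro hx
          have := (H i).2 hx
          rw [hi] at this
          exact Bool.false_ne_true this
  set εx : StSp B → (Fin n → Bool) := fun x i => decide (x ∈ ePt (a i)) with hεx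
  have hεx_spec : ∀ (x : StSp B) (i), εx x i = true ↔ x ∈ ePt (a i) := by
    intro x i; simp [hεx]
  have hx_mem : ∀ x, x ∈ ePt (u (εx x)) := by
    intro x
    rw [hmem]
    intro i
    exact hεx_spec x i
  have hx_unique : ∀ (x : StSp B) (ε), x ∈ ePt (u ε) → ε = εx x := by
    intro x ε hx
    funext i
    have h1 := (hmem x ε).1 hx i
    have h2 := hεx_spec x i
    cases hi : ε i with
    | true => exact ((h2.2 (h1.1 hi))).symm
    | false =>
        cases hi' : εx x i with
        | true => exact absurd (h1.2 (h2.1 hi')) (by simp [hi])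
        | false => rfl
  have humem : ∀ ε, u ε ∈ C := by
    intro ε
    refine finsetInf_mem hC _ _ fun i _ => ?_
    cases hi : ε i with
    | true => rw [if_pos (by simp [hi])]; exact ha i
    | false => rw [if_neg (by simp [hi])]; exact hC.2.2.2 _ (ha i)
  have hdisj : ∀ ε ε', ε ≠ ε' → u ε ⊓ u ε' = ⊥ := by
    intro ε ε' hne
    obtain ⟨i, hi⟩ := Function.ne_iff.1 hne
    refine le_antisymm ?_ bot_le
    have l1 : u ε ≤ if ε i then a i else (a i)ᶜ := Finset.inf_le (Finset.mem_univ i)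
    have l2 : u ε' ≤ if ε' i then a i else (a i)ᶜ := Finset.inf_le (Finset.mem_univ i)
    have : u ε ⊓ u ε' ≤ (if ε i then a i else (a i)ᶜ) ⊓ (if ε' i then a i else (a i)ᶜ) :=
      inf_le_inf l1 l2
    cases h1 : ε i with
    | true =>
        cases h2 : ε' i with
        | true => exact absurd (h1.trans h2.symm) hi
        | false => simpa [h1, h2] using this
    | false =>
        cases h2 : ε' i with
        | true => simpa [h1, h2] using this
        | false => exact absurd (h1.trans h2.symm) hi
  have hsup : Finset.univ.sup u = ⊤ := by
    apply ePt_inj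
    ext x
    rw [mem_ePt_finsetSup, ePt_top]
    simp only [Set.mem_univ, iff_true]
    exact ⟨εx x, Finset.mem_univ _, hx_mem x⟩
  have hchiu : ∀ (x : StSp B) (ε), chi (u ε) x = if ε = εx x then 1 else 0 := by
    intro x ε
    by_cases h : ε = εx x
    · rw [if_pos h, h]; exact chi_of_mem (hx_mem x)
    · rw [if_neg h]
      refine chi_of_not_mem fun hx => h (hx_unique x ε hx)
  refine ⟨u, γ, humem, hdisj, hsup, ?_, ?_⟩
  · intro x
    have lhs : ∑ ε, γ ε * chi (u ε) x = γ (εx x) := by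
      rw [Finset.sum_eq_single (εx x)]
      · rw [chi_of_mem (hx_mem x), mul_one]
      · intro ε _ hne
        rw [hchiu, if_neg hne, mul_zero]
      · intro h; exact absurd (Finset.mem_univ _) h
    rw [lhs, hγ]
    refine Finset.sum_congr rfl fun i _ => ?_
    by_cases h : x ∈ ePt (a i)
    · rw [if_pos ((hεx_spec x i).2 h), chi_of_mem h, mul_one]
    · rw [if_neg (fun hh => h ((hεx_spec x i).1 hh)), chi_of_not_mem h, mul_zero]
  · have hai : ∀ i, Ξ (a i) = ∑ ε ∈ Finset.univ.filter (fun ε => ε i = true), Ξ (u ε) := by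
      intro i
      have key : a i = (Finset.univ.filter (fun ε => ε i = true)).sup u := by
        apply ePt_inj
        ext x
        rw [mem_ePt_finsetSup]
        constructor
        · intro hx
          exact ⟨εx x, Finset.mem_filter.2 ⟨Finset.mem_univ _, (hεx_spec x i).2 hx⟩, hx_mem x⟩
        · rintro ⟨ε, hεf, hxε⟩
          have := hx_unique x ε hxε
          rw [this] at hεf
          exact (hεx_spec x i).1 (Finset.mem_filter.1 hεf).2
      rw [key]
      exact fam_sum hC hΞ _ u (fun ε _ => humem ε)
        (fun ε _ ε' _ hne => hdisj ε ε' hne)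
    calc ∑ ε, γ ε * Ξ (u ε) = ∑ ε, ∑ i, if ε i then α i * Ξ (u ε) else 0 := by
          refine Finset.sum_congr rfl fun ε _ => ?_
          rw [hγ, Finset.sum_mul]
          exact Finset.sum_congr rfl fun i _ => by rw [ite_mul, zero_mul]
      _ = ∑ i, ∑ ε, if ε i then α i * Ξ (u ε) else 0 := by
          exact Finset.sum_comm
      _ = ∑ i, α i * Ξ (a i) := by
          refine Finset.sum_congr rfl fun i _ => ?_
          rw [hai i, Finset.mul_sum, Finset.sum_filter]

theorem atomicKL {S₀ S₁ : Set B} {Ξ₀ Ξ₁ : B → ℝ} (hS₀ : IsSubalg S₀) (hS₁ : IsSubalg S₁)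
    (hfam₀ : IsFAMOn Ξ₀ S₀) (hfam₁ : IsFAMOn Ξ₁ S₁)
    (htop : Ξ₀ ⊤ = Ξ₁ ⊤)
    (hmono : ∀ a ∈ S₀, ∀ a' ∈ S₁, a ≤ a' → Ξ₀ a ≤ Ξ₁ a')
    {ι κ : Type*} [Fintype ι] [Fintype κ] [Nonempty ι] [Nonempty κ]
    (u : ι → B) (v : κ → B)
    (hu : ∀ i, u i ∈ S₀) (hv : ∀ j, v j ∈ S₁)
    (hdu : ∀ i i', i ≠ i' → u i ⊓ u i' = ⊥) (hdv : ∀ j j', j ≠ j' → v j ⊓ v j' = ⊥)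
    (hsu : Finset.univ.sup u = ⊤) (hsv : Finset.univ.sup v = ⊤)
    (γ : ι → ℝ) (δ : κ → ℝ)
    (hcross : ∀ i j, u i ⊓ v j ≠ ⊥ → γ i ≤ δ j) :
    ∑ i, γ i * Ξ₀ (u i) ≤ ∑ j, δ j * Ξ₁ (v j) := by
  classical
  have hsum₀ : Ξ₀ ⊤ = ∑ i, Ξ₀ (u i) := by
    rw [← hsu]; exact fam_sum hS₀ hfam₀ _ u (fun i _ => hu i) (fun i _ j _ h => hdu i j h)
  have hsum₁ : Ξ₁ ⊤ = ∑ j, Ξ₁ (v j) := by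
    rw [← hsv]; exact fam_sum hS₁ hfam₁ _ v (fun j _ => hv j) (fun i _ j _ h => hdv i j h)
  suffices H : ∀ (N : ℕ) (γ : ι → ℝ) (δ : κ → ℝ),
      (Finset.image γ Finset.univ ∪ Finset.image δ Finset.univ).card ≤ N →
      (∀ i j, u i ⊓ v j ≠ ⊥ → γ i ≤ δ j) →
      ∑ i, γ i * Ξ₀ (u i) ≤ ∑ j, δ j * Ξ₁ (v j) by
    exact H _ γ δ le_rfl hcross
  intro N
  induction N with
  | zero =>
      intro γ δ hcard _
      exfalso
      have : γ (Classical.arbitrary ι) ∈ Finset.image γ Finset.univ ∪ Finset.image δ Finset.univ := by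
        exact Finset.mem_union_left _ (Finset.mem_image_of_mem γ (Finset.mem_univ _))
      have := Finset.card_pos.2 ⟨_, this⟩
      omega
  | succ N ih =>
      intro γ δ hcard hcross
      set F := Finset.image γ Finset.univ ∪ Finset.image δ Finset.univ with hF
      have hγmem : ∀ i, γ i ∈ F := fun i =>
        Finset.mem_union_left _ (Finset.mem_image_of_mem γ (Finset.mem_univ _))
      have hδmem : ∀ j, δ j ∈ F := fun j =>
        Finset.mem_union_right _ (Finset.mem_image_of_mem δ (Finset.mem_univ _))
      have hFne : F.Nonempty := ⟨_, hγmem (Classical.arbitrary ι)⟩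
      by_cases hone : F.card ≤ 1
      · set t := γ (Classical.arbitrary ι) with ht
        have hconst : ∀ s ∈ F, s = t := by
          intro s hs
          exact Finset.card_le_one.1 hone s hs t (hγmem _)
        have e₀ : ∑ i, γ i * Ξ₀ (u i) = t * Ξ₀ ⊤ := by
          rw [hsum₀, Finset.mul_sum]
          exact Finset.sum_congr rfl fun i _ => by rw [hconst _ (hγmem i)]
        have e₁ : ∑ j, δ j * Ξ₁ (v j) = t * Ξ₁ ⊤ := by
          rw [hsum₁, Finset.mul_sum]
          exact Finset.sum_congr rfl fun j _ => by rw [hconst _ (hδmem j)]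
        rw [e₀, e₁, htop]
      · push_neg at hone
        set tmax := F.max' hFne with htmax
        have htmaxmem : tmax ∈ F := F.max'_mem hFne
        set F' := F.erase tmax with hF'
        have hF'ne : F'.Nonempty := by
          rw [← Finset.card_pos, hF', Finset.card_erase_of_mem htmaxmem]
          omega
        set t' := F'.max' hF'ne with ht'
        have ht'mem : t' ∈ F' := F'.max'_mem hF'ne
        have ht'lt : t' < tmax := by
          rcases Finset.mem_erase.1 ht'mem with ⟨hne, hmem⟩
          exact lt_of_le_of_ne (F.le_max' _ hmem) hne
        have hmaxF : ∀ s ∈ F, s ≤ tmax := fun s hs => F.le_max' s hs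
        have hleF : ∀ s ∈ F, s ≠ tmax → s ≤ t' := fun s hs hne =>
          F'.le_max' s (Finset.mem_erase.2 ⟨hne, hs⟩)
        set γ' := fun i => min (γ i) t' with hγ'
        set δ' := fun j => min (δ j) t' with hδ'
        have hminmem : ∀ (f : ι ⊕ κ → ℝ), True := fun _ => trivial
        have hsub : Finset.image γ' Finset.univ ∪ Finset.image δ' Finset.univ ⊆ F' := by
          intro s hs
          have hcase : (∃ i, s = min (γ i) t') ∨ (∃ j, s = min (δ j) t') := by
            rcases Finset.mem_union.1 hs with h | h
            · obtain ⟨i, _, hi⟩ := Finset.mem_image.1 h; exact Or.inl ⟨i, hi.symm⟩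
            · obtain ⟨j, _, hj⟩ := Finset.mem_image.1 h; exact Or.inr ⟨j, hj.symm⟩
          have key : ∀ r : ℝ, r ∈ F → min r t' ∈ F' := by
            intro r hr
            by_cases h : r ≤ t'
            · rw [min_eq_left h]
              exact Finset.mem_erase.2 ⟨fun he => absurd (he ▸ h) (not_le.2 ht'lt), hr⟩
            · rw [min_eq_right (le_of_not_ge h)]
              exact ht'mem
          rcases hcase with ⟨i, hi⟩ | ⟨j, hj⟩
          · rw [hi]; exact key _ (hγmem i)
          · rw [hj]; exact key _ (hδmem j)
        have hcard' : (Finset.image γ' Finset.univ ∪ Finset.image δ' Finset.univ).card ≤ N := by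
          have h1 := Finset.card_le_card hsub
          rw [hF', Finset.card_erase_of_mem htmaxmem] at h1
          omega
        have hcross' : ∀ i j, u i ⊓ v j ≠ ⊥ → γ' i ≤ δ' j := fun i j h =>
          min_le_min (hcross i j h) le_rfl
        have hrec := ih γ' δ' hcard' hcross'
        set I := Finset.univ.filter (fun i => γ i = tmax) with hI
        set J := Finset.univ.filter (fun j => δ j = tmax) with hJ
        set A := I.sup u with hA
        set Bv := J.sup v with hBv
        have hAmem : A ∈ S₀ := finsetSup_mem hS₀ _ _ fun i _ => hu i
        have hBmem : Bv ∈ S₁ := finsetSup_mem hS₁ _ _ fun j _ => hv j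
        have hAB : A ≤ Bv := by
          refine Finset.sup_le fun i hi => ?_
          have hγi : γ i = tmax := (Finset.mem_filter.1 hi).2
          have hui : u i = Finset.univ.sup (fun j => u i ⊓ v j) := by
            rw [← Finset.sup_inf_distrib_left, hsv, inf_top_eq]
          rw [hui]
          refine Finset.sup_le fun j _ => ?_
          by_cases h : u i ⊓ v j = ⊥
          · rw [h]; exact bot_le
          · have hδj : δ j = tmax :=
              le_antisymm (hmaxF _ (hδmem j)) (hγi ▸ hcross i j h)
            exact le_trans inf_le_right
              (Finset.le_sup (Finset.mem_filter.2 ⟨Finset.mem_univ _, hδj⟩))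
        have hmeasA : Ξ₀ A = ∑ i ∈ I, Ξ₀ (u i) :=
          fam_sum hS₀ hfam₀ _ u (fun i _ => hu i) (fun i _ j _ h => hdu i j h)
        have hmeasB : Ξ₁ Bv = ∑ j ∈ J, Ξ₁ (v j) :=
          fam_sum hS₁ hfam₁ _ v (fun j _ => hv j) (fun i _ j _ h => hdv i j h)
        have hdec₀ : ∑ i, γ i * Ξ₀ (u i)
            = ∑ i, γ' i * Ξ₀ (u i) + (tmax - t') * Ξ₀ A := by
          rw [hmeasA, Finset.mul_sum, hI, ← Finset.sum_filter_add_sum_filter_not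
            Finset.univ (fun i => γ i = tmax) (fun i => γ i * Ξ₀ (u i))]
          rw [← Finset.sum_filter_add_sum_filter_not
            Finset.univ (fun i => γ i = tmax) (fun i => γ' i * Ξ₀ (u i))]
          have e1 : ∑ i ∈ Finset.univ.filter (fun i => γ i = tmax), γ i * Ξ₀ (u i)
              = ∑ i ∈ Finset.univ.filter (fun i => γ i = tmax),
                  (γ' i * Ξ₀ (u i) + (tmax - t') * Ξ₀ (u i)) := by
            refine Finset.sum_congr rfl fun i hi => ?_
            have hγi : γ i = tmax := (Finset.mem_filter.1 hi).2
            have : γ' i = t' := by rw [hγ']; simp only []; rw [hγi, min_eq_right ht'lt.le]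
            rw [this, hγi]; ring
          have e2 : ∑ i ∈ Finset.univ.filter (fun i => ¬ γ i = tmax), γ i * Ξ₀ (u i)
              = ∑ i ∈ Finset.univ.filter (fun i => ¬ γ i = tmax), γ' i * Ξ₀ (u i) := by
            refine Finset.sum_congr rfl fun i hi => ?_
            have hγi : γ i ≠ tmax := (Finset.mem_filter.1 hi).2
            have : γ' i = γ i := by
              rw [hγ']; simp only []; rw [min_eq_left (hleF _ (hγmem i) hγi)]
            rw [this]
          rw [e1, e2, Finset.sum_add_distrib, ← Finset.mul_sum]
          ring
        have hdec₁ : ∑ j, δ j * Ξ₁ (v j)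
            = ∑ j, δ' j * Ξ₁ (v j) + (tmax - t') * Ξ₁ Bv := by
          rw [hmeasB, Finset.mul_sum, hJ, ← Finset.sum_filter_add_sum_filter_not
            Finset.univ (fun j => δ j = tmax) (fun j => δ j * Ξ₁ (v j))]
          rw [← Finset.sum_filter_add_sum_filter_not
            Finset.univ (fun j => δ j = tmax) (fun j => δ' j * Ξ₁ (v j))]
          have e1 : ∑ j ∈ Finset.univ.filter (fun j => δ j = tmax), δ j * Ξ₁ (v j)
              = ∑ j ∈ Finset.univ.filter (fun j => δ j = tmax),
                  (δ' j * Ξ₁ (v j) + (tmax - t') * Ξ₁ (v j)) := by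
            refine Finset.sum_congr rfl fun j hj => ?_
            have hδj : δ j = tmax := (Finset.mem_filter.1 hj).2
            have : δ' j = t' := by rw [hδ']; simp only []; rw [hδj, min_eq_right ht'lt.le]
            rw [this, hδj]; ring
          have e2 : ∑ j ∈ Finset.univ.filter (fun j => ¬ δ j = tmax), δ j * Ξ₁ (v j)
              = ∑ j ∈ Finset.univ.filter (fun j => ¬ δ j = tmax), δ' j * Ξ₁ (v j) := by
            refine Finset.sum_congr rfl fun j hj => ?_
            have hδj : δ j ≠ tmax := (Finset.mem_filter.1 hj).2
            have : δ' j = δ j := by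
              rw [hδ']; simp only []; rw [min_eq_left (hleF _ (hδmem j) hδj)]
            rw [this]
          rw [e1, e2, Finset.sum_add_distrib, ← Finset.mul_sum]
          ring
        have hmAB : (tmax - t') * Ξ₀ A ≤ (tmax - t') * Ξ₁ Bv :=
          mul_le_mul_of_nonneg_left (hmono A hAmem Bv hBmem hAB) (by linarith)
        rw [hdec₀, hdec₁]
        linarith

theorem eval_disjoint {ι : Type*} [Fintype ι] (u : ι → B)
    (hdu : ∀ i i', i ≠ i' → u i ⊓ u i' = ⊥) (γ : ι → ℝ) {x : StSp B} {i₀ : ι}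
    (hx : x ∈ ePt (u i₀)) : ∑ i, γ i * chi (u i) x = γ i₀ := by
  rw [Finset.sum_eq_single i₀]
  · rw [chi_of_mem hx, mul_one]
  · intro i _ hne
    have : x ∉ ePt (u i) := by
      intro hxi
      have : x ∈ ePt (u i ⊓ u i₀) := by rw [ePt_inf]; exact ⟨hxi, hx⟩
      rw [hdu i i₀ hne, ePt_bot] at this
      exact this
    rw [chi_of_not_mem this, mul_zero]
  · intro h; exact absurd (Finset.mem_univ _) h

theorem KL {S₀ S₁ : Set B} {Ξ₀ Ξ₁ : B → ℝ} (hS₀ : IsSubalg S₀) (hS₁ : IsSubalg S₁)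
    (hfam₀ : IsFAMOn Ξ₀ S₀) (hfam₁ : IsFAMOn Ξ₁ S₁)
    (htop : Ξ₀ ⊤ = Ξ₁ ⊤)
    (hmono : ∀ a ∈ S₀, ∀ a' ∈ S₁, a ≤ a' → Ξ₀ a ≤ Ξ₁ a')
    {n m : ℕ} (a : Fin n → B) (b : Fin m → B) (α : Fin n → ℝ) (β : Fin m → ℝ)
    (ha : ∀ i, a i ∈ S₀) (hb : ∀ j, b j ∈ S₁)
    (hle : ∀ x, ∑ i, α i * chi (a i) x ≤ ∑ j, β j * chi (b j) x) :
    ∑ i, α i * Ξ₀ (a i) ≤ ∑ j, β j * Ξ₁ (b j) := by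
  obtain ⟨u, γ, hu, hdu, hsu, hptu, hmu⟩ := atomize hS₀ hfam₀ a ha α
  obtain ⟨v, δ, hv, hdv, hsv, hptv, hmv⟩ := atomize hS₁ hfam₁ b hb β
  rw [← hmu, ← hmv]
  refine atomicKL hS₀ hS₁ hfam₀ hfam₁ htop hmono u v hu hv hdu hdv hsu hsv γ δ ?_
  intro ε ε' hne
  obtain ⟨x, hx⟩ := ePt_nonempty hne
  rw [ePt_inf] at hx
  have e1 : γ ε = ∑ ε'', γ ε'' * chi (u ε'') x := (eval_disjoint u hdu γ hx.1).symm
  have e2 : ∑ ε'', δ ε'' * chi (v ε'') x = δ ε' := eval_disjoint v hdv δ hx.2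
  rw [e1, ← e2, hptu x, hptv x]
  exact hle x

theorem kl_const {S₀ S₁ : Set B} {Ξ₀ Ξ₁ : B → ℝ} (hS₀ : IsSubalg S₀) (hS₁ : IsSubalg S₁)
    (hfam₀ : IsFAMOn Ξ₀ S₀) (hfam₁ : IsFAMOn Ξ₁ S₁)
    (htop : Ξ₀ ⊤ = Ξ₁ ⊤)
    (hmono : ∀ a ∈ S₀, ∀ a' ∈ S₁, a ≤ a' → Ξ₀ a ≤ Ξ₁ a')
    (c : ℝ) {n : ℕ} (d : Fin n → Bool) (a : Fin n → B) (α : Fin n → ℝ)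
    (ha : ∀ i, a i ∈ (if d i then S₁ else S₀))
    (hle : ∀ x, c ≤ ∑ i, α i * chi (a i) x) :
    c * Ξ₀ ⊤ ≤ ∑ i, α i * (if d i then Ξ₁ else Ξ₀) (a i) := by
  classical
  set aL : Fin (n + 1) → B := Fin.snoc (fun i => if d i then ⊤ else a i) ⊤ with haL
  set αL : Fin (n + 1) → ℝ := Fin.snoc (fun i => if d i then 0 else -α i) c with hαL
  set aR : Fin n → B := fun i => if d i then a i else ⊤ with haR
  set αR : Fin n → ℝ := fun i => if d i then α i else 0 with hαR
  have memL : ∀ i, aL i ∈ S₀ := by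
    intro i
    refine Fin.lastCases ?_ ?_ i
    · rw [haL, Fin.snoc_last]; exact hS₀.2.1
    · intro j
      rw [haL, Fin.snoc_castSucc]
      cases hd : d j with
      | true => rw [if_pos (by simp [hd])]; exact hS₀.2.1
      | false => rw [if_neg (by simp [hd])]; have := ha j; rwa [if_neg (by simp [hd])] at this
  have memR : ∀ i, aR i ∈ S₁ := by
    intro j
    rw [haR]
    cases hd : d j with
    | true =>
        simp only []
        rw [if_pos (by simp [hd])]
        have := ha j; rwa [if_pos (by simp [hd])] at this
    | false => simp only []; rw [if_neg (by simp [hd])]; exact hS₁.2.1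
  have sum_split : ∀ (f : Fin n → ℝ),
      ∑ i, f i = (∑ i, if d i then f i else 0) + ∑ i, if d i then 0 else f i := by
    intro f
    rw [← Finset.sum_add_distrib]
    exact Finset.sum_congr rfl fun i _ => by cases hd : d i <;> simp [hd]
  have hle' : ∀ x, ∑ i, αL i * chi (aL i) x ≤ ∑ i, αR i * chi (aR i) x := by
    intro x
    rw [Fin.sum_univ_castSucc]
    have eL : ∀ j : Fin n, αL j.castSucc * chi (aL j.castSucc) x
        = if d j then 0 else -(α j * chi (a j) x) := by
      intro j
      rw [haL, hαL, Fin.snoc_castSucc, Fin.snoc_castSucc]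
      cases hd : d j <;> simp [hd]
    have eR : ∀ j : Fin n, αR j * chi (aR j) x = if d j then α j * chi (a j) x else 0 := by
      intro j
      rw [haR, hαR]
      cases hd : d j <;> simp [hd]
    have elast : αL (Fin.last n) * chi (aL (Fin.last n)) x = c := by
      rw [haL, hαL, Fin.snoc_last, Fin.snoc_last, chi_top, mul_one]
    rw [elast, Finset.sum_congr rfl fun j _ => eL j, Finset.sum_congr rfl fun j _ => eR j]
    have h0 := hle x
    rw [sum_split (fun i => α i * chi (a i) x)] at h0
    have : ∑ i, (if d i then 0 else -(α i * chi (a i) x))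
        = -∑ i, (if d i then 0 else α i * chi (a i) x) := by
      rw [← Finset.sum_neg_distrib]
      exact Finset.sum_congr rfl fun i _ => by cases hd : d i <;> simp [hd]
    rw [this]
    linarith
  have := KL hS₀ hS₁ hfam₀ hfam₁ htop hmono aL aR αL αR memL memR hle'
  rw [Fin.sum_univ_castSucc] at this
  have eL : ∀ j : Fin n, αL j.castSucc * Ξ₀ (aL j.castSucc)
      = if d j then 0 else -(α j * Ξ₀ (a j)) := by
    intro j
    rw [haL, hαL, Fin.snoc_castSucc, Fin.snoc_castSucc]
    cases hd : d j <;> simp [hd]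
  have eR : ∀ j : Fin n, αR j * Ξ₁ (aR j) = if d j then α j * Ξ₁ (a j) else 0 := by
    intro j
    rw [haR, hαR]
    cases hd : d j <;> simp [hd]
  have elast : αL (Fin.last n) * Ξ₀ (aL (Fin.last n)) = c * Ξ₀ ⊤ := by
    rw [haL, hαL, Fin.snoc_last, Fin.snoc_last]
  rw [elast, Finset.sum_congr rfl fun j _ => eL j, Finset.sum_congr rfl fun j _ => eR j] at this
  have hneg : ∑ i, (if d i then 0 else -(α i * Ξ₀ (a i)))
      = -∑ i, (if d i then 0 else α i * Ξ₀ (a i)) := by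
    rw [← Finset.sum_neg_distrib]
    exact Finset.sum_congr rfl fun i _ => by cases hd : d i <;> simp [hd]
  rw [hneg] at this
  have htgt : ∑ i, α i * (if d i then Ξ₁ else Ξ₀) (a i)
      = (∑ i, if d i then α i * Ξ₁ (a i) else 0) + ∑ i, (if d i then 0 else α i * Ξ₀ (a i)) := by
    rw [← Finset.sum_add_distrib]
    exact Finset.sum_congr rfl fun i _ => by cases hd : d i <;> simp [hd]
  rw [htgt]
  linarith

theorem chi_sup_disjoint {a b : B} (h : a ⊓ b = ⊥) : chi (a ⊔ b) = chi a + chi b := by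
  funext x
  by_cases hx : x ∈ ePt (a ⊔ b)
  · rw [Pi.add_apply, chi_of_mem hx]
    rw [ePt_sup] at hx
    have hnot : ¬ (x ∈ ePt a ∧ x ∈ ePt b) := by
      rintro ⟨h1, h2⟩
      have : x ∈ ePt (a ⊓ b) := by rw [ePt_inf]; exact ⟨h1, h2⟩
      rw [h, ePt_bot] at this
      exact this
    rcases hx with h1 | h1
    · have h2 : x ∉ ePt b := fun hb => hnot ⟨h1, hb⟩
      rw [chi_of_mem h1, chi_of_not_mem h2]; norm_num
    · have h2 : x ∉ ePt a := fun hb => hnot ⟨hb, h1⟩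
      rw [chi_of_mem h1, chi_of_not_mem h2]; norm_num
  · rw [Pi.add_apply, chi_of_not_mem hx]
    rw [ePt_sup] at hx
    have h1 : x ∉ ePt a := fun h => hx (Or.inl h)
    have h2 : x ∉ ePt b := fun h => hx (Or.inr h)
    rw [chi_of_not_mem h1, chi_of_not_mem h2]; norm_num

theorem exists_extension {S₀ S₁ : Set B} {Ξ₀ Ξ₁ : B → ℝ} (hS₀ : IsSubalg S₀)
    (hS₁ : IsSubalg S₁) (hfam₀ : IsFAMOn Ξ₀ S₀) (hfam₁ : IsFAMOn Ξ₁ S₁)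
    (htop : Ξ₀ ⊤ = Ξ₁ ⊤)
    (hmono : ∀ a ∈ S₀, ∀ a' ∈ S₁, a ≤ a' → Ξ₀ a ≤ Ξ₁ a') :
    ∃ Ξ : B → ℝ, IsFAMOn Ξ (subalgClosure (S₀ ∪ S₁)) ∧
      (∀ a ∈ S₀, Ξ a = Ξ₀ a) ∧ (∀ a ∈ S₁, Ξ a = Ξ₁ a) := by
  classical
  set D := subalgClosure (S₀ ∪ S₁) with hD
  have hDalg : IsSubalg D := subalgClosure_isSubalg _
  have hSD : S₀ ∪ S₁ ⊆ D := subset_subalgClosure _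
  set W : Submodule ℝ (StSp B → ℝ) := Submodule.span ℝ {f | ∃ c ∈ D, f = chi c} with hW
  set P : (StSp B → ℝ) → Set ℝ := fun f =>
    {r | ∃ (n : ℕ) (d : Fin n → Bool) (a : Fin n → B) (α : Fin n → ℝ),
      (∀ i, a i ∈ (if d i then S₁ else S₀)) ∧
      (∀ x, f x ≤ ∑ i, α i * chi (a i) x) ∧
      r = ∑ i, α i * (if d i then Ξ₁ else Ξ₀) (a i)} with hP
  have hPlb : ∀ (f : StSp B → ℝ) (c : ℝ), (∀ x, c ≤ f x) → ∀ r ∈ P f, c * Ξ₀ ⊤ ≤ r := by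
    rintro f c hcf r ⟨n, d, a, α, hmem, hle, rfl⟩
    exact kl_const hS₀ hS₁ hfam₀ hfam₁ htop hmono c d a α hmem
      (fun x => (hcf x).trans (hle x))
  have hPbdd : ∀ f : StSp B → ℝ, (∃ c : ℝ, ∀ x, c ≤ f x) → BddBelow (P f) := by
    rintro f ⟨c, hc⟩
    exact ⟨c * Ξ₀ ⊤, fun r hr => hPlb f c hc r hr⟩
  have hWbdd : ∀ f ∈ W, ∃ M : ℝ, 0 ≤ M ∧ ∀ x, |f x| ≤ M := by
    intro f hf
    induction hf using Submodule.span_induction with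
    | mem f hfmem =>
        exact ⟨1, zero_le_one, fun x => by
          obtain ⟨c, _, rfl⟩ := hfmem
          rw [abs_le]
          exact ⟨by linarith [chi_nonneg c x], chi_le_one c x⟩⟩
    | zero => exact ⟨0, le_rfl, fun x => by simp⟩
    | add f g hfm hgm hf hg =>
        obtain ⟨M, hM0, hM⟩ := hf
        obtain ⟨M', hM'0, hM'⟩ := hg
        exact ⟨M + M', by linarith, fun x => by
          calc |(f + g) x| ≤ |f x| + |g x| := abs_add_le _ _
            _ ≤ M + M' := add_le_add (hM x) (hM' x)⟩
    | smul t f hfm hf =>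
        obtain ⟨M, hM0, hM⟩ := hf
        exact ⟨|t| * M, by positivity, fun x => by
          rw [Pi.smul_apply, smul_eq_mul, abs_mul]
          exact mul_le_mul_of_nonneg_left (hM x) (abs_nonneg t)⟩
  have hchiW : ∀ c ∈ D, chi c ∈ W := fun c hc => Submodule.subset_span ⟨c, hc, rfl⟩
  have hPne : ∀ f ∈ W, (P f).Nonempty := by
    intro f hf
    obtain ⟨M, hM0, hM⟩ := hWbdd f hf
    refine ⟨M * Ξ₀ ⊤, 1, (fun _ => false), (fun _ => ⊤), (fun _ => M), ?_, ?_, ?_⟩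
    · intro i; rw [if_neg (by simp)]; exact hS₀.2.1
    · intro x
      rw [Fin.sum_univ_one, chi_top, mul_one]
      exact (abs_le.1 (hM x)).2
    · rw [Fin.sum_univ_one, if_neg (by simp)]
  have hEc : ∀ f : ↥W, ∃ c : ℝ, ∀ x, c ≤ (f : StSp B → ℝ) x := by
    intro f
    obtain ⟨M, hM0, hM⟩ := hWbdd f.1 f.2
    exact ⟨-M, fun x => (abs_le.1 (hM x)).1⟩
  set N : ↥W → ℝ := fun f => sInf (P f.1) with hN
  have N_le : ∀ (f : ↥W) (r), r ∈ P f.1 → N f ≤ r := fun f r hr =>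
    csInf_le (hPbdd _ (hEc f)) hr
  have N_ge : ∀ (f : ↥W) (b : ℝ), (∀ r ∈ P f.1, b ≤ r) → b ≤ N f := fun f b hb =>
    le_csInf (hPne _ f.2) hb
  have hscale : ∀ (c : ℝ), 0 < c → ∀ (f : StSp B → ℝ) (r : ℝ), r ∈ P f → c * r ∈ P (c • f) := by
    rintro c hc f r ⟨n, d, a, α, hmem, hle, rfl⟩
    refine ⟨n, d, a, fun i => c * α i, hmem, fun x => ?_, ?_⟩
    · rw [Pi.smul_apply, smul_eq_mul]
      calc c * f x ≤ c * ∑ i, α i * chi (a i) x :=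
            mul_le_mul_of_nonneg_left (hle x) hc.le
        _ = ∑ i, c * α i * chi (a i) x := by
            rw [Finset.mul_sum]; exact Finset.sum_congr rfl fun i _ => by ring
    · rw [Finset.mul_sum]; exact Finset.sum_congr rfl fun i _ => by ring
  have N_hom : ∀ (c : ℝ), 0 < c → ∀ f : ↥W, N (c • f) = c * N f := by
    intro c hc f
    have hcoe : ((c • f : ↥W) : StSp B → ℝ) = c • (f : StSp B → ℝ) := rfl
    refine le_antisymm ?_ ?_
    · have h1 : ∀ r ∈ P f.1, N (c • f) ≤ c * r := by
        intro r hr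
        refine N_le _ _ ?_
        rw [hcoe]
        exact hscale c hc f.1 r hr
      have h2 : N (c • f) / c ≤ N f :=
        N_ge f _ (fun r hr => (div_le_iff₀ hc).2 (by rw [mul_comm]; exact h1 r hr))
      calc N (c • f) = N (c • f) / c * c := by field_simp
        _ ≤ N f * c := mul_le_mul_of_nonneg_right h2 hc.le
        _ = c * N f := mul_comm _ _
    · refine N_ge _ _ (fun r hr => ?_)
      have hc' : (0 : ℝ) < 1 / c := by positivity
      have h3 : (1 / c) * r ∈ P f.1 := by
        have := hscale (1 / c) hc' ((c • f : ↥W) : StSp B → ℝ) r hr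
        have he : (1 / c) • ((c • f : ↥W) : StSp B → ℝ) = f.1 := by
          rw [hcoe, smul_smul]
          field_simp
          rw [one_smul]
        rwa [he] at this
      have h4 : N f ≤ (1 / c) * r := N_le f _ h3
      calc c * N f ≤ c * ((1 / c) * r) := mul_le_mul_of_nonneg_left h4 hc.le
        _ = r := by field_simp
  have hconcat : ∀ (f g : StSp B → ℝ) (r s : ℝ), r ∈ P f → s ∈ P g → r + s ∈ P (f + g) := by
    rintro f g r s ⟨n, d, a, α, hmem, hle, rfl⟩ ⟨m, d', a', α', hmem', hle', rfl⟩
    refine ⟨n + m, Fin.append d d', Fin.append a a', Fin.append α α', ?_, ?_, ?_⟩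
    · intro i
      refine Fin.addCases ?_ ?_ i
      · intro j; rw [Fin.append_left, Fin.append_left]; exact hmem j
      · intro j; rw [Fin.append_right, Fin.append_right]; exact hmem' j
    · intro x
      rw [Fin.sum_univ_add]
      have e1 : (∑ i : Fin n, Fin.append α α' (Fin.castAdd m i)
            * chi (Fin.append a a' (Fin.castAdd m i)) x) = ∑ i, α i * chi (a i) x :=
        Finset.sum_congr rfl fun j _ => by rw [Fin.append_left, Fin.append_left]
      have e2 : (∑ i : Fin m, Fin.append α α' (Fin.natAdd n i)
            * chi (Fin.append a a' (Fin.natAdd n i)) x) = ∑ i, α' i * chi (a' i) x :=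
        Finset.sum_congr rfl fun j _ => by rw [Fin.append_right, Fin.append_right]
      rw [e1, e2]
      exact add_le_add (hle x) (hle' x)
    · rw [Fin.sum_univ_add]
      congr 1
      · exact Finset.sum_congr rfl fun j _ => by rw [Fin.append_left, Fin.append_left, Fin.append_left]
      · exact Finset.sum_congr rfl fun j _ => by rw [Fin.append_right, Fin.append_right, Fin.append_right]
  have N_add : ∀ f g : ↥W, N (f + g) ≤ N f + N g := by
    intro f g
    have key : ∀ r ∈ P f.1, ∀ s ∈ P g.1, N (f + g) ≤ r + s := by
      intro r hr s hs
      refine N_le _ _ ?_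
      have : ((f + g : ↥W) : StSp B → ℝ) = f.1 + g.1 := rfl
      rw [this]
      exact hconcat f.1 g.1 r s hr hs
    have step : ∀ r ∈ P f.1, N (f + g) - N g ≤ r := by
      intro r hr
      have : N (f + g) - r ≤ N g := N_ge g _ (fun s hs => by linarith [key r hr s hs])
      linarith
    have := N_ge f _ step
    linarith
  have hN0 : 0 ≤ N 0 := by
    refine N_ge 0 0 (fun r hr => ?_)
    have h0 : ((0 : ↥W) : StSp B → ℝ) = 0 := rfl
    rw [h0] at hr
    have := hPlb (0 : StSp B → ℝ) 0 (fun x => le_rfl) r hr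
    simpa using this
  obtain ⟨g, hg0, hgle⟩ := exists_extension_of_le_sublinear
    (⟨⊥, 0⟩ : (↥W) →ₗ.[ℝ] ℝ) N N_hom N_add
    (fun x => by
      have hx : (x : ↥W) = 0 := Submodule.mem_bot ℝ |>.1 x.2
      have : (⟨⊥, 0⟩ : (↥W) →ₗ.[ℝ] ℝ) x = 0 := rfl
      rw [this, hx]
      exact hN0)
  set Ξ : B → ℝ := fun c => if h : chi c ∈ W then g ⟨chi c, h⟩ else 0 with hΞdef
  have hΞeq : ∀ c (hc : chi c ∈ W), Ξ c = g ⟨chi c, hc⟩ := by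
    intro c hc
    rw [hΞdef]
    exact dif_pos hc
  -- single representations
  have hsingle : ∀ (t : ℝ) (b : Bool) (c : B), c ∈ (if b then S₁ else S₀) →
      t * (if b then Ξ₁ else Ξ₀) c ∈ P (t • chi c) := by
    intro t b c hc
    refine ⟨1, fun _ => b, fun _ => c, fun _ => t, fun _ => hc, fun x => ?_, ?_⟩
    · rw [Fin.sum_univ_one]; rfl
    · rw [Fin.sum_univ_one]
  have hgval : ∀ (b : Bool) (c : B), c ∈ (if b then S₁ else S₀) → ∀ (hc : chi c ∈ W),
      g ⟨chi c, hc⟩ = (if b then Ξ₁ else Ξ₀) c := by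
    intro b c hcS hc
    have h1 : g ⟨chi c, hc⟩ ≤ (if b then Ξ₁ else Ξ₀) c := by
      have := hgle ⟨chi c, hc⟩
      have hr : (if b then Ξ₁ else Ξ₀) c ∈ P ((⟨chi c, hc⟩ : ↥W) : StSp B → ℝ) := by
        have := hsingle 1 b c hcS
        rw [one_smul, one_mul] at this
        exact this
      exact this.trans (N_le _ _ hr)
    have h2 : -g ⟨chi c, hc⟩ ≤ -(if b then Ξ₁ else Ξ₀) c := by
      have hneg : g (-⟨chi c, hc⟩) ≤ N (-⟨chi c, hc⟩) := hgle _
      rw [map_neg] at hneg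
      have hr : -(if b then Ξ₁ else Ξ₀) c ∈ P ((-⟨chi c, hc⟩ : ↥W) : StSp B → ℝ) := by
        have := hsingle (-1) b c hcS
        rw [neg_one_smul] at this
        have hco : ((-⟨chi c, hc⟩ : ↥W) : StSp B → ℝ) = -(chi c) := rfl
        rw [hco]
        simpa using this
      exact hneg.trans (N_le _ _ hr)
    linarith
  refine ⟨Ξ, ⟨?_, ?_, ?_⟩, ?_, ?_⟩
  · -- Ξ ⊥ = 0
    have hbW : chi (⊥ : B) ∈ W := hchiW ⊥ hDalg.1
    rw [hΞeq ⊥ hbW]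
    have : (⟨chi (⊥ : B), hbW⟩ : ↥W) = 0 := Subtype.ext chi_bot
    rw [this, map_zero]
  · -- nonneg
    intro c hc
    have hcW : chi c ∈ W := hchiW c hc
    rw [hΞeq c hcW]
    have hneg : g (-⟨chi c, hcW⟩) ≤ N (-⟨chi c, hcW⟩) := hgle _
    rw [map_neg] at hneg
    have hr : (0 : ℝ) ∈ P ((-⟨chi c, hcW⟩ : ↥W) : StSp B → ℝ) := by
      refine ⟨0, Fin.elim0, Fin.elim0, Fin.elim0, fun i => i.elim0, fun x => ?_, by simp⟩
      have hco : ((-⟨chi c, hcW⟩ : ↥W) : StSp B → ℝ) x = -(chi c x) := rfl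
      rw [hco]
      simp only [Finset.univ_eq_empty, Finset.sum_empty]
      linarith [chi_nonneg c x]
    have := hneg.trans (N_le _ _ hr)
    linarith
  · -- additive
    intro a ha b hb hab
    have haW : chi a ∈ W := hchiW a ha
    have hbW : chi b ∈ W := hchiW b hb
    have habW : chi (a ⊔ b) ∈ W := hchiW _ (hDalg.2.2.1 a ha b hb)
    rw [hΞeq _ habW, hΞeq _ haW, hΞeq _ hbW]
    have : (⟨chi (a ⊔ b), habW⟩ : ↥W) = ⟨chi a, haW⟩ + ⟨chi b, hbW⟩ :=
      Subtype.ext (chi_sup_disjoint hab)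
    rw [this, map_add]
  · -- extends Ξ₀
    intro a ha
    have haW : chi a ∈ W := hchiW a (hSD (Or.inl ha))
    rw [hΞeq a haW]
    have := hgval false a (by rw [if_neg (by simp)]; exact ha) haW
    rwa [if_neg (by simp)] at this
  · -- extends Ξ₁
    intro a ha
    have haW : chi a ∈ W := hchiW a (hSD (Or.inr ha))
    rw [hΞeq a haW]
    have := hgval true a (by rw [if_pos rfl]; exact ha) haW
    rwa [if_pos rfl] at this

theorem fam_compl {C : Set B} {Ξ : B → ℝ} (hC : IsSubalg C) (hΞ : IsFAMOn Ξ C)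
    {a : B} (ha : a ∈ C) : Ξ a + Ξ aᶜ = Ξ ⊤ := by
  have h := hΞ.2.2 a ha aᶜ (hC.2.2.2 a ha) inf_compl_eq_bot
  rw [sup_compl_eq_top] at h
  linarith

end FamExt
end Aux


open FamExt

/-- Compatibility theorem for finitely additive measures: given finite fams
`Ξ₀, Ξ₁` on Boolean subalgebras `S₀, S₁` of `B`, the following are equivalent:
(a) there is a fam on the subalgebra generated by `S₀ ∪ S₁` extending both;
(b) `Ξ₀(1) = Ξ₁(1)` and `a ≤ a'` with `a ∈ S₀`, `a' ∈ S₁` implies `Ξ₀(a) ≤ Ξ₁(a')`;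
(c) for all `d, d' ∈ {0,1}`, `a ∈ S_d`, `a' ∈ S_{d'}`, `a ≤ a'` implies
`Ξ_d(a) ≤ Ξ_{d'}(a')`. -/
theorem stmt5 {B : Type*} [BooleanAlgebra B] (S₀ S₁ : Set B)
    (hS₀ : IsSubalg S₀) (hS₁ : IsSubalg S₁)
    (Ξ₀ Ξ₁ : B → ℝ) (hfam₀ : IsFAMOn Ξ₀ S₀) (hfam₁ : IsFAMOn Ξ₁ S₁) :
    ((∃ Ξ : B → ℝ, IsFAMOn Ξ (subalgClosure (S₀ ∪ S₁)) ∧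
        (∀ a ∈ S₀, Ξ a = Ξ₀ a) ∧ (∀ a ∈ S₁, Ξ a = Ξ₁ a)) ↔
      (Ξ₀ ⊤ = Ξ₁ ⊤ ∧ ∀ a ∈ S₀, ∀ a' ∈ S₁, a ≤ a' → Ξ₀ a ≤ Ξ₁ a')) ∧
    ((Ξ₀ ⊤ = Ξ₁ ⊤ ∧ ∀ a ∈ S₀, ∀ a' ∈ S₁, a ≤ a' → Ξ₀ a ≤ Ξ₁ a') ↔
      (∀ d d' : Fin 2, ∀ a a' : B,
        a ∈ (if d = 0 then S₀ else S₁) → a' ∈ (if d' = 0 then S₀ else S₁) →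
        a ≤ a' → (if d = 0 then Ξ₀ else Ξ₁) a ≤ (if d' = 0 then Ξ₀ else Ξ₁) a')) := by
  have hDalg : IsSubalg (subalgClosure (S₀ ∪ S₁)) := subalgClosure_isSubalg _
  have hSD : S₀ ∪ S₁ ⊆ subalgClosure (S₀ ∪ S₁) := subset_subalgClosure _
  constructor
  · constructor
    · rintro ⟨Ξ, hfam, hext₀, hext₁⟩
      refine ⟨?_, ?_⟩
      · rw [← hext₀ ⊤ hS₀.2.1, ← hext₁ ⊤ hS₁.2.1]
      · intro a ha a' ha' hle
        rw [← hext₀ a ha, ← hext₁ a' ha']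
        exact fam_mono hDalg hfam (hSD (Or.inl ha)) (hSD (Or.inr ha')) hle
    · rintro ⟨htop, hmono⟩
      exact exists_extension hS₀ hS₁ hfam₀ hfam₁ htop hmono
  · constructor
    · rintro ⟨htop, hmono⟩ d d' a a' ha ha' hle
      have hd : d = 0 ∨ d = 1 := by omega
      have hd' : d' = 0 ∨ d' = 1 := by omega
      rcases hd with rfl | rfl <;> rcases hd' with rfl | rfl
      · rw [if_pos rfl] at ha ha' ⊢
        exact fam_mono hS₀ hfam₀ ha ha' hle
      · rw [if_pos rfl] at ha ⊢
        rw [if_neg (by decide)] at ha' ⊢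
        exact hmono a ha a' ha' hle
      · rw [if_neg (by decide)] at ha ⊢
        rw [if_pos rfl] at ha' ⊢
        have hc : a'ᶜ ≤ aᶜ := compl_le_compl hle
        have h1 : Ξ₀ a'ᶜ ≤ Ξ₁ aᶜ := hmono _ (hS₀.2.2.2 _ ha') _ (hS₁.2.2.2 _ ha) hc
        have e₀ : Ξ₀ a' + Ξ₀ a'ᶜ = Ξ₀ ⊤ := fam_compl hS₀ hfam₀ ha'
        have e₁ : Ξ₁ a + Ξ₁ aᶜ = Ξ₁ ⊤ := fam_compl hS₁ hfam₁ ha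
        linarith
      · rw [if_neg (by decide)] at ha ha' ⊢
        exact fam_mono hS₁ hfam₁ ha ha' hle
    · intro h
      constructor
      · have h01 := h 0 1 ⊤ ⊤ (by rw [if_pos rfl]; exact hS₀.2.1)
          (by rw [if_neg (by decide)]; exact hS₁.2.1) le_rfl
        have h10 := h 1 0 ⊤ ⊤ (by rw [if_neg (by decide)]; exact hS₁.2.1)
          (by rw [if_pos rfl]; exact hS₀.2.1) le_rfl
        rw [if_pos rfl, if_neg (by decide)] at h01 h10
        exact le_antisymm h01 h10
      · intro a ha a' ha' hle
        have := h 0 1 a a' (by rw [if_pos rfl]; exact ha)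
          (by rw [if_neg (by decide)]; exact ha') hle
        rwa [if_pos rfl, if_neg (by decide)] at this
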